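/- arXiv:1412.0642 — 2 statements merged into one kernel-verified Lean document; each statement's English description precedes it below -/
import Mathlib

section
/- Let G be the group with presentation ⟨a, b, t | t a t⁻¹ = a b, t b t⁻¹ = b a b⟩ (the fundamental group of the figure-eight knot complement). The homomorphism ι : F₂ → G sending the free generators u, v to a, b respectively is injective; that is, the subgroup of G generated by a and b is free of rank 2 with free basis {a, b}. -/
/-- The relations `t a t⁻¹ = a b` and `t b t⁻¹ = b a b` of the figure-eight knot group,
with generators `a, b, t` encoded as `0, 1, 2 : Fin 3`. -/
def fig8Rels : Set (FreeGroup (Fin 3)) :=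
  {FreeGroup.of 2 * FreeGroup.of 0 * (FreeGroup.of 2)⁻¹ *
      (FreeGroup.of 0 * FreeGroup.of 1)⁻¹,
   FreeGroup.of 2 * FreeGroup.of 1 * (FreeGroup.of 2)⁻¹ *
      (FreeGroup.of 1 * FreeGroup.of 0 * FreeGroup.of 1)⁻¹}

/-- The fundamental group of the figure-eight knot complement,
`⟨a, b, t | t a t⁻¹ = a b, t b t⁻¹ = b a b⟩`. -/
abbrev Fig8 : Type := PresentedGroup fig8Rels

/-- The generator `a` of the figure-eight knot group. -/
def fig8a : Fig8 := PresentedGroup.of 0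

/-- The generator `b` of the figure-eight knot group. -/
def fig8b : Fig8 := PresentedGroup.of 1

/-- The generator `t` of the figure-eight knot group. -/
def fig8t : Fig8 := PresentedGroup.of 2

/-- The homomorphism `F₂ → G` sending the free generators `u, v` to `a, b`. -/
def fig8iota : FreeGroup (Fin 2) →* Fig8 := FreeGroup.lift ![fig8a, fig8b]

namespace Fig8Aux

abbrev F2 := FreeGroup (Fin 2)

/-- `u ↦ uv, v ↦ vuv`. -/
def φf : F2 →* F2 := FreeGroup.lift ![FreeGroup.of 0 * FreeGroup.of 1,
  FreeGroup.of 1 * FreeGroup.of 0 * FreeGroup.of 1]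

/-- `u ↦ u²v⁻¹, v ↦ vu⁻¹`. -/
def φg : F2 →* F2 := FreeGroup.lift ![FreeGroup.of 0 * FreeGroup.of 0 * (FreeGroup.of 1)⁻¹,
  FreeGroup.of 1 * (FreeGroup.of 0)⁻¹]

lemma gf : φg.comp φf = MonoidHom.id F2 := by
  apply FreeGroup.ext_hom
  intro i
  fin_cases i <;>
    simp [φf, φg, FreeGroup.lift_apply_of, Matrix.cons_val_zero, Matrix.cons_val_one] <;> group

lemma fg : φf.comp φg = MonoidHom.id F2 := by
  apply FreeGroup.ext_hom
  intro i
  fin_cases i <;>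
    simp [φf, φg, FreeGroup.lift_apply_of, Matrix.cons_val_zero, Matrix.cons_val_one] <;> group

/-- The automorphism `u ↦ uv, v ↦ vuv` of `F₂`. -/
def φe : F2 ≃* F2 := MonoidHom.toMulEquiv φf φg gf fg

/-- The corresponding `ℤ`-action. -/
def Φ : Multiplicative ℤ →* MulAut F2 := zpowersHom (MulAut F2) φe

/-- The semidirect product `F₂ ⋊ ℤ`. -/
abbrev H : Type := SemidirectProduct F2 (Multiplicative ℤ) Φ

open SemidirectProduct in
/-- Images of the generators `a, b, t`. -/
def gens : Fin 3 → H := ![inl (FreeGroup.of 0), inl (FreeGroup.of 1),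
  inr (Multiplicative.ofAdd 1)]

lemma Φ_one : Φ (Multiplicative.ofAdd 1) = φe := by
  simp [Φ, zpowersHom_apply]

lemma rels_hold : ∀ r ∈ fig8Rels, FreeGroup.lift gens r = 1 := by
  intro r hr
  have key : ∀ n : F2, SemidirectProduct.inr (φ := Φ) (Multiplicative.ofAdd 1) *
      SemidirectProduct.inl n * (SemidirectProduct.inr (Multiplicative.ofAdd 1))⁻¹ =
      SemidirectProduct.inl (φf n) := by
    intro n
    rw [← map_inv, ← SemidirectProduct.inl_aut, Φ_one]
    rfl
  rcases hr with h | h <;> subst h <;>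
    simp only [map_mul, map_inv, FreeGroup.lift_apply_of, gens, Matrix.cons_val_zero,
      Matrix.cons_val_one, Matrix.head_cons, Matrix.cons_val_two, Matrix.tail_cons] <;>
    rw [key] <;>
    · simp only [← map_mul]
      simp only [← map_inv]
      simp only [← map_mul]
      simp [φf, FreeGroup.lift_apply_of]

/-- The quotient map `Fig8 → F₂ ⋊ ℤ`. -/
def π : Fig8 →* H := PresentedGroup.toGroup rels_hold

lemma π_comp : π.comp fig8iota = SemidirectProduct.inl := by
  apply FreeGroup.ext_hom
  intro i
  fin_cases i <;>
    simp [π, fig8iota, fig8a, fig8b, PresentedGroup.toGroup.of, gens]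

end Fig8Aux

/-- The subgroup of the figure-eight knot group generated by `a` and `b` is free of
rank 2 with free basis `{a, b}`: the homomorphism `F₂ → G`, `u ↦ a`, `v ↦ b` is
injective. -/
theorem fig8_fiber_subgroup_free : Function.Injective fig8iota := by
  have h : Function.Injective (Fig8Aux.π.comp fig8iota) := by
    rw [Fig8Aux.π_comp]
    exact SemidirectProduct.inl_injective
  exact fun x y hxy => h (by simp [MonoidHom.comp_apply, hxy])
end

section
/- Let G be the group with presentation ⟨a, b, t | t a t⁻¹ = a b, t b t⁻¹ = b a b⟩ and let ι : F₂ → G be the homomorphism sending the free generators u, v to a, b respectively. Then ι is not a quasi-isometric embedding with respect to the word metric of the basis {u, v} on F₂ and the word metric of the generating set {a, b, t} on G. -/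
/-- The word length of `g` with respect to a generating set `S`: the minimal length of a
word in the elements of `S` and their inverses representing `g`. -/
noncomputable def wordLength {G : Type*} [Group G] (S : Set G) (g : G) : ℕ :=
  sInf {n | ∃ l : List G, l.length = n ∧ (∀ x ∈ l, x ∈ S ∨ x⁻¹ ∈ S) ∧ l.prod = g}

lemma fig8_rel1 : fig8t * fig8a * fig8t⁻¹ = fig8a * fig8b := by
  have h : PresentedGroup.mk fig8Rels
      (FreeGroup.of 2 * FreeGroup.of 0 * (FreeGroup.of 2)⁻¹ *
        (FreeGroup.of 0 * FreeGroup.of 1)⁻¹) = 1 := by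
    apply (QuotientGroup.eq_one_iff _).mpr
    exact Subgroup.subset_normalClosure (Or.inl rfl)
  simp only [map_mul, map_inv] at h
  have := mul_eq_one_iff_eq_inv.mp h
  simpa [fig8a, fig8b, fig8t, PresentedGroup.of, mul_assoc] using this

lemma fig8_rel2 : fig8t * fig8b * fig8t⁻¹ = fig8b * fig8a * fig8b := by
  have h : PresentedGroup.mk fig8Rels
      (FreeGroup.of 2 * FreeGroup.of 1 * (FreeGroup.of 2)⁻¹ *
        (FreeGroup.of 1 * FreeGroup.of 0 * FreeGroup.of 1)⁻¹) = 1 := by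
    apply (QuotientGroup.eq_one_iff _).mpr
    exact Subgroup.subset_normalClosure (Or.inr rfl)
  simp only [map_mul, map_inv] at h
  have := mul_eq_one_iff_eq_inv.mp h
  simpa [fig8a, fig8b, fig8t, PresentedGroup.of, mul_assoc] using this

/-- The substitution `u ↦ u v`, `v ↦ v u v`. -/
def phi8 : FreeGroup (Fin 2) →* FreeGroup (Fin 2) :=
  FreeGroup.lift ![FreeGroup.of 0 * FreeGroup.of 1,
    FreeGroup.of 1 * FreeGroup.of 0 * FreeGroup.of 1]

/-- `wseq n` is the word in `F₂` representing `t^n a t⁻ⁿ`. -/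
def wseq : ℕ → FreeGroup (Fin 2)
  | 0 => FreeGroup.of 0
  | n+1 => phi8 (wseq n)

/-- Exponent-sum homomorphisms. -/
def es (i : Fin 2) : FreeGroup (Fin 2) →* Multiplicative ℤ :=
  FreeGroup.lift fun j => Multiplicative.ofAdd (if j = i then 1 else 0)

lemma es_phi (w : FreeGroup (Fin 2)) :
    (es 0 (phi8 w)).toAdd = (es 0 w).toAdd + (es 1 w).toAdd ∧
    (es 1 (phi8 w)).toAdd = (es 0 w).toAdd + 2 * (es 1 w).toAdd := by
  constructor
  · have : (es 0).comp phi8 = es 0 * es 1 := by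
      apply FreeGroup.ext_hom
      intro a
      fin_cases a <;> simp [phi8, es, FreeGroup.lift_apply_of]
    have := congrFun (congrArg (↑·) this) w
    simpa using congrArg Multiplicative.toAdd this
  · have : (es 1).comp phi8 = es 0 * es 1 * es 1 := by
      apply FreeGroup.ext_hom
      intro a
      fin_cases a <;> simp [phi8, es, FreeGroup.lift_apply_of]
    have := congrFun (congrArg (↑·) this) w
    have h2 := congrArg Multiplicative.toAdd this
    simp at h2
    simp [h2]; ring

lemma es_wseq (n : ℕ) : 0 ≤ (es 0 (wseq n)).toAdd ∧ 0 ≤ (es 1 (wseq n)).toAdd ∧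
    (2 : ℤ)^n ≤ (es 0 (wseq n)).toAdd + (es 1 (wseq n)).toAdd := by
  induction n with
  | zero =>
    have h0 : es 0 (wseq 0) = Multiplicative.ofAdd 1 := by
      simp [wseq, es, FreeGroup.lift_apply_of]
    have h1 : es 1 (wseq 0) = Multiplicative.ofAdd 0 := by
      simp [wseq, es, FreeGroup.lift_apply_of]
    simp [h0, h1]
  | succ n ih =>
    obtain ⟨h0, h1, hs⟩ := ih
    obtain ⟨e0, e1⟩ := es_phi (wseq n)
    refine ⟨?_, ?_, ?_⟩
    · show (0:ℤ) ≤ (es 0 (phi8 (wseq n))).toAdd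
      rw [e0]; omega
    · show (0:ℤ) ≤ (es 1 (phi8 (wseq n))).toAdd
      rw [e1]; omega
    · show (2:ℤ)^(n+1) ≤ (es 0 (phi8 (wseq n))).toAdd + (es 1 (phi8 (wseq n))).toAdd
      rw [e0, e1, pow_succ]
      nlinarith

/-- The total exponent sum bounds the reduced word length from below. -/
lemma toWord_length_lb (w : FreeGroup (Fin 2)) :
    (es 0 w).toAdd + (es 1 w).toAdd ≤ (w.toWord.length : ℤ) := by
  have htot : es 0 w * es 1 w =
      FreeGroup.lift (fun _ : Fin 2 => Multiplicative.ofAdd (1:ℤ)) w := by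
    have : es 0 * es 1 =
        FreeGroup.lift (fun _ : Fin 2 => Multiplicative.ofAdd (1:ℤ)) := by
      apply FreeGroup.ext_hom
      intro a
      fin_cases a <;> simp [es, FreeGroup.lift_apply_of]
    exact congrFun (congrArg (↑·) this) w
  have key : ∀ L : List (Fin 2 × Bool),
      (FreeGroup.lift (fun _ : Fin 2 => Multiplicative.ofAdd (1:ℤ))
        (FreeGroup.mk L)).toAdd ≤ (L.length : ℤ) := by
    intro L
    induction L with
    | nil => simp [FreeGroup.lift_mk]
    | cons hd tl ih =>
      rw [FreeGroup.lift_mk] at ih ⊢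
      rw [List.map_cons, List.prod_cons]
      rcases hd with ⟨i, b⟩
      cases b <;> simp at ih ⊢ <;> omega
  have := key w.toWord
  rw [FreeGroup.mk_toWord] at this
  calc (es 0 w).toAdd + (es 1 w).toAdd = (es 0 w * es 1 w).toAdd := by simp
    _ ≤ _ := by rw [htot] at *; exact this

lemma iota_phi8 (w : FreeGroup (Fin 2)) :
    fig8iota (phi8 w) = fig8t * fig8iota w * fig8t⁻¹ := by
  have : fig8iota.comp phi8 =
      ((MulAut.conj fig8t).toMonoidHom).comp fig8iota := by
    apply FreeGroup.ext_hom
    intro a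
    fin_cases a
    · simpa [phi8, fig8iota, FreeGroup.lift_apply_of, MulAut.conj_apply, mul_assoc]
        using fig8_rel1.symm
    · simpa [phi8, fig8iota, FreeGroup.lift_apply_of, MulAut.conj_apply, mul_assoc]
        using fig8_rel2.symm
  have := congrFun (congrArg (↑·) this) w
  simpa [MulAut.conj_apply, mul_assoc] using this

lemma iota_wseq (n : ℕ) :
    fig8iota (wseq n) = fig8t^n * fig8a * (fig8t^n)⁻¹ := by
  induction n with
  | zero => simp [wseq, fig8iota, FreeGroup.lift_apply_of]
  | succ n ih =>
    show fig8iota (phi8 (wseq n)) = _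
    rw [iota_phi8, ih, pow_succ]
    group

lemma wl_wseq_le (n : ℕ) :
    wordLength ({fig8a, fig8b, fig8t} : Set Fig8) (fig8iota (wseq n)) ≤ 2*n+1 := by
  apply Nat.sInf_le
  refine ⟨List.replicate n fig8t ++ fig8a :: List.replicate n fig8t⁻¹, ?_, ?_, ?_⟩
  · simp; omega
  · intro x hx
    simp only [List.mem_append, List.mem_cons, List.mem_replicate] at hx
    rcases hx with ⟨-, rfl⟩ | rfl | ⟨-, rfl⟩
    · left; simp
    · left; simp
    · right; simp
  · rw [List.prod_append, List.prod_cons, List.prod_replicate, List.prod_replicate,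
      iota_wseq, inv_pow]
    group

lemma nat_growth (M : ℕ) : M * (4*M) < 2^(4*M) := by
  have hk : 2*M < 2^(2*M) := Nat.lt_two_pow_self
  calc M*(4*M) = (2*M)*(2*M) := by ring
    _ < 2^(2*M) * 2^(2*M) := by
        rcases Nat.eq_zero_or_pos M with rfl | hM
        · simp
        · exact Nat.mul_lt_mul_of_lt_of_lt hk hk
    _ = 2^(4*M) := by rw [← pow_add]; ring_nf

/-- The inclusion of the fiber free subgroup `⟨a, b⟩` in the figure-eight knot group
is not a quasi-isometric embedding. -/
theorem fig8_not_qi_embedding :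
    ¬ ∃ lam eps : ℝ, 1 ≤ lam ∧ 0 ≤ eps ∧
      ∀ p q : FreeGroup (Fin 2),
        (1 / lam) * ((p⁻¹ * q).toWord.length : ℝ) - eps ≤
            (wordLength ({fig8a, fig8b, fig8t} : Set Fig8)
              ((fig8iota p)⁻¹ * fig8iota q) : ℝ) ∧
        (wordLength ({fig8a, fig8b, fig8t} : Set Fig8)
            ((fig8iota p)⁻¹ * fig8iota q) : ℝ) ≤
          lam * ((p⁻¹ * q).toWord.length : ℝ) + eps := by
  rintro ⟨lam, eps, hlam, heps, h⟩
  have hlam0 : (0:ℝ) < lam := lt_of_lt_of_le one_pos hlam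
  obtain ⟨M, hM⟩ := exists_nat_gt (lam * (3 + eps))
  set n := 4 * M with hn
  have hn1 : (1:ℝ) ≤ (n:ℝ) := by
    have hM1 : 1 ≤ M := by
      by_contra hc
      push_neg at hc
      interval_cases M
      simp at hM
      nlinarith
    have : 1 ≤ n := by omega
    exact_mod_cast this
  have hlow := (h 1 (wseq n)).1
  simp only [inv_one, one_mul, map_one] at hlow
  set len := ((wseq n).toWord.length : ℝ) with hlen_def
  set W := wordLength ({fig8a, fig8b, fig8t} : Set Fig8) (fig8iota (wseq n)) with hW_def
  -- upper bound on the word length in Fig8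
  have hW : (W:ℝ) ≤ 2*(n:ℝ)+1 := by
    have := wl_wseq_le n
    have : (W:ℝ) ≤ ((2*n+1 : ℕ) : ℝ) := by exact_mod_cast this
    push_cast at this
    linarith
  -- lower bound on the free group length
  have hlen : (2:ℝ)^n ≤ len := by
    obtain ⟨h0, h1, hs⟩ := es_wseq n
    have := toWord_length_lb (wseq n)
    have hz : (2:ℤ)^n ≤ ((wseq n).toWord.length : ℤ) := le_trans hs this
    rw [hlen_def]
    exact_mod_cast hz
  -- combine
  have h3 : len ≤ lam * (2*(n:ℝ)+1+eps) := by
    rw [div_mul_eq_mul_div, sub_le_iff_le_add] at hlow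
    rw [div_le_iff₀ hlam0] at hlow
    nlinarith
  have h6 : (M:ℝ) * (n:ℝ) < 2^n := by
    have := nat_growth M
    rw [← hn] at this
    exact_mod_cast this
  have inner : 2*(n:ℝ)+1+eps ≤ (3+eps)*(n:ℝ) := by nlinarith
  have e1 : lam * (2*(n:ℝ)+1+eps) ≤ (lam*(3+eps))*(n:ℝ) := by
    calc lam * (2*(n:ℝ)+1+eps) ≤ lam * ((3+eps)*(n:ℝ)) :=
          mul_le_mul_of_nonneg_left inner hlam0.le
      _ = (lam*(3+eps))*(n:ℝ) := by ring
  have e2 : (lam*(3+eps))*(n:ℝ) ≤ (M:ℝ)*(n:ℝ) := by nlinarith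
  linarith
end
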